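/- Let S be a finite left regular band with identity, k a field, w = Σ_{t∈S} w_t t ∈ kS, and λ_X = Σ_{σ(t)≥X} w_t for X in the lattice L of principal left ideals. If X > Y implies λ_X ≠ λ_Y, then the minimal polynomial of w (as an element of the finite-dimensional algebra kS, or equivalently of left multiplication by w) splits over k with distinct roots; consequently the subalgebra k[w] is split semisimple (isomorphic to a finite product of copies of k). -/

import Mathlib

/-- The principal left ideal `Ss = {u * s : u ∈ S}` generated by `s`. -/
def leftIdeal {S : Type*} [Monoid S] (s : S) : Set S := {x | ∃ u, x = u * s}

section Aux

variable {S : Type*} [Monoid S]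

lemma li_mem_self (s : S) : s ∈ leftIdeal s := ⟨1, (one_mul s).symm⟩

lemma li_subset_iff {r s : S} : leftIdeal r ⊆ leftIdeal s ↔ r ∈ leftIdeal s := by
  constructor
  · intro h; exact h (li_mem_self r)
  · rintro ⟨u, rfl⟩ x ⟨v, rfl⟩; exact ⟨v * u, (mul_assoc v u s).symm⟩

lemma mul_right_eq_iff (idem : ∀ x : S, x * x = x) {s t : S} :
    s * t = s ↔ leftIdeal s ⊆ leftIdeal t := by
  rw [li_subset_iff]
  constructor
  · intro h; exact ⟨s, h.symm⟩
  · rintro ⟨u, rfl⟩; rw [mul_assoc, idem]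

lemma li_mul_subset (lrb : ∀ x y : S, x * y * x = x * y) (s t : S) :
    leftIdeal (s * t) ⊆ leftIdeal s := li_subset_iff.mpr ⟨s * t, (lrb s t).symm⟩

lemma li_mul_ssubset (idem : ∀ x : S, x * x = x) (lrb : ∀ x y : S, x * y * x = x * y)
    {s t : S} (h : s * t ≠ s) : leftIdeal (s * t) ⊂ leftIdeal s := by
  refine ⟨li_mul_subset lrb s t, fun hsub => h ?_⟩
  obtain ⟨u, hu⟩ := li_subset_iff.mp hsub
  calc s * t = u * (s * t) * t := by rw [← hu]
    _ = u * (s * (t * t)) := by rw [mul_assoc, mul_assoc]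
    _ = u * (s * t) := by rw [idem]
    _ = s := hu.symm

end Aux

open Classical in
theorem stmt_6 {S : Type*} [Monoid S] [Fintype S]
    (idem : ∀ x : S, x * x = x) (lrb : ∀ x y : S, x * y * x = x * y)
    (k : Type*) [Field k] (c : S → k)
    (w : MonoidAlgebra k S) (hw : w = ∑ t : S, MonoidAlgebra.single t (c t))
    (lam : S → k)
    (hlam : ∀ x : S,
      lam x = ∑ t ∈ Finset.univ.filter (fun t : S => leftIdeal x ⊆ leftIdeal t), c t)
    (hdist : ∀ x y : S, leftIdeal y ⊂ leftIdeal x → lam x ≠ lam y) :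
    (minpoly k w).Splits ∧ (minpoly k w).roots.Nodup ∧
      ∃ n : ℕ, Nonempty
        ((Algebra.adjoin k ({w} : Set (MonoidAlgebra k S))) ≃ₐ[k] (Fin n → k)) := by
  classical
  -- the set of elements whose left ideal is below that of `s`
  set D : S → Finset S := fun s => Finset.univ.filter (fun r => leftIdeal r ⊆ leftIdeal s)
    with hD
  set V : S → Finset k := fun s => (D s).image lam with hV
  set P : S → Polynomial k := fun s => ∏ v ∈ V s, (Polynomial.X - Polynomial.C v) with hP
  have hsD : ∀ s : S, s ∈ D s := fun s => by
    simp [hD, Finset.mem_filter]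
  have hlamV : ∀ s : S, lam s ∈ V s := fun s =>
    Finset.mem_image.mpr ⟨s, hsD s, rfl⟩
  -- the reformulated lambda formula
  have hlam' : ∀ s : S, lam s = ∑ t ∈ Finset.univ.filter (fun t => s * t = s), c t := by
    intro s
    rw [hlam s]
    apply Finset.sum_congr _ (fun _ _ => rfl)
    apply Finset.filter_congr
    intro t _
    exact (mul_right_eq_iff idem).symm
  -- basic multiplication computation
  have hstep : ∀ s : S,
      MonoidAlgebra.single s (1 : k) * (w - algebraMap k (MonoidAlgebra k S) (lam s)) =
        ∑ t ∈ Finset.univ.filter (fun t => s * t ≠ s),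
          MonoidAlgebra.single (s * t) (c t) := by
    intro s
    have h1 : MonoidAlgebra.single s (1 : k) * w =
        ∑ t : S, MonoidAlgebra.single (s * t) (c t) := by
      rw [hw, Finset.mul_sum]
      exact Finset.sum_congr rfl fun t _ => by
        rw [MonoidAlgebra.single_mul_single, one_mul]
    have h2 : MonoidAlgebra.single s (1 : k) * algebraMap k (MonoidAlgebra k S) (lam s) =
        MonoidAlgebra.single s (lam s) := by
      rw [MonoidAlgebra.coe_algebraMap]
      simp only [Function.comp_apply]
      rw [MonoidAlgebra.single_mul_single, mul_one, Algebra.algebraMap_self, RingHom.id_apply,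
        one_mul]
    rw [mul_sub, h1, h2]
    have h3 : (∑ t : S, MonoidAlgebra.single (s * t) (c t)) =
        (∑ t ∈ Finset.univ.filter (fun t => s * t = s), MonoidAlgebra.single (s * t) (c t))
        + ∑ t ∈ Finset.univ.filter (fun t => s * t ≠ s),
            MonoidAlgebra.single (s * t) (c t) := by
      exact (Finset.sum_filter_add_sum_filter_not _ _ _).symm
    have h4 : (∑ t ∈ Finset.univ.filter (fun t => s * t = s),
        MonoidAlgebra.single (s * t) (c t)) = MonoidAlgebra.single s (lam s) := by
      rw [hlam' s]
      refine Eq.trans (Finset.sum_congr rfl fun t ht => ?_)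
        (map_sum (MonoidAlgebra.singleAddHom s) c _).symm
      rw [(Finset.mem_filter.mp ht).2]; rfl
    rw [h3, h4]
    abel
  -- the key annihilation lemma
  have key : ∀ (n : ℕ) (s : S), (D s).card ≤ n →
      MonoidAlgebra.single s (1 : k) * (Polynomial.aeval w (P s)) = 0 := by
    intro n
    induction n with
    | zero =>
      intro s hs
      exact absurd (Finset.card_pos.mpr ⟨s, hsD s⟩) (by omega)
    | succ n ih =>
      intro s hs
      have hfac : P s = (Polynomial.X - Polynomial.C (lam s)) *
          ∏ v ∈ (V s).erase (lam s), (Polynomial.X - Polynomial.C v) :=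
        (Finset.mul_prod_erase _ _ (hlamV s)).symm
      rw [hfac, map_mul, ← mul_assoc]
      have haev : Polynomial.aeval w (Polynomial.X - Polynomial.C (lam s)) =
          w - algebraMap k (MonoidAlgebra k S) (lam s) := by
        rw [map_sub, Polynomial.aeval_X, Polynomial.aeval_C]
      rw [haev, hstep s, Finset.sum_mul]
      apply Finset.sum_eq_zero
      intro t ht
      have hne : s * t ≠ s := (Finset.mem_filter.mp ht).2
      have hssub : leftIdeal (s * t) ⊂ leftIdeal s := li_mul_ssubset idem lrb hne
      have hDDsub : D (s * t) ⊆ D s := by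
        intro r hr
        simp only [hD, Finset.mem_filter, Finset.mem_univ, true_and] at hr ⊢
        exact hr.trans hssub.1
      have hsnot : s ∉ D (s * t) := by
        intro hcon
        simp only [hD, Finset.mem_filter, Finset.mem_univ, true_and] at hcon
        exact hssub.2 hcon
      have hDsub : D (s * t) ⊂ D s :=
        (Finset.ssubset_iff_of_subset hDDsub).mpr ⟨s, hsD s, hsnot⟩
      have hVsub : V (s * t) ⊆ (V s).erase (lam s) := by
        intro v hv
        obtain ⟨r, hr, rfl⟩ := Finset.mem_image.mp hv
        refine Finset.mem_erase.mpr ⟨?_, Finset.mem_image.mpr ⟨r, hDsub.1 hr, rfl⟩⟩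
        have hrs : leftIdeal r ⊂ leftIdeal s := by
          simp only [hD, Finset.mem_filter, Finset.mem_univ, true_and] at hr
          exact lt_of_le_of_lt hr hssub
        exact (hdist s r hrs).symm
      have hprod : (∏ v ∈ (V s).erase (lam s), (Polynomial.X - Polynomial.C v)) =
          P (s * t) * ∏ v ∈ (V s).erase (lam s) \ V (s * t),
            (Polynomial.X - Polynomial.C v) := by
        rw [mul_comm, Finset.prod_sdiff hVsub]
      have hsingle : MonoidAlgebra.single (s * t) (c t) =
          c t • MonoidAlgebra.single (s * t) (1 : k) := by
        rw [MonoidAlgebra.smul_single, smul_eq_mul, mul_one]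
      rw [hprod, map_mul, ← mul_assoc, hsingle, smul_mul_assoc, smul_mul_assoc]
      have hcard : (D (s * t)).card ≤ n := by
        have := Finset.card_lt_card hDsub
        omega
      rw [ih (s * t) hcard, zero_mul, smul_zero]
  -- conclude the global annihilation
  have hP0 : Polynomial.aeval w (P 1) = 0 := by
    have := key (D (1 : S)).card 1 le_rfl
    rwa [← MonoidAlgebra.one_def, one_mul] at this
  have hP1monic : (P 1).Monic :=
    Polynomial.monic_prod_of_monic _ _ fun v _ => Polynomial.monic_X_sub_C v
  have hdvd : minpoly k w ∣ P 1 := minpoly.dvd k w hP0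
  have hP1splits : (P 1).Splits :=
    Polynomial.Splits.prod fun v _ => Polynomial.Splits.X_sub_C _
  have hsplits : (minpoly k w).Splits :=
    Polynomial.Splits.of_dvd hP1splits hP1monic.ne_zero hdvd
  have hsep : (P 1).Separable := by
    have : (∏ v ∈ V 1, (Polynomial.X - Polynomial.C (id v))).Separable :=
      Polynomial.separable_prod_X_sub_C_iff'.mpr fun _ _ _ _ h => h
    simpa using this
  have hminsep : (minpoly k w).Separable := hsep.of_dvd hdvd
  have hnodup : (minpoly k w).roots.Nodup := Polynomial.nodup_roots hminsep
  refine ⟨hsplits, hnodup, ?_⟩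
  -- Part 3 : the adjoin algebra is a finite power of k
  have hint : IsIntegral k w := ⟨P 1, hP1monic, hP0⟩
  have hpmonic : (minpoly k w).Monic := minpoly.monic hint
  set RT : Finset k := (minpoly k w).roots.toFinset with hRT
  have hfact : minpoly k w = ∏ v ∈ RT, (Polynomial.X - Polynomial.C v) := by
    have h := hsplits.eq_prod_roots_of_monic hpmonic
    rw [h, Finset.prod_eq_multiset_prod, hRT]
    congr 1
    rw [Multiset.toFinset_val, Multiset.dedup_eq_self.mpr hnodup]
  set A0 : Subalgebra k (MonoidAlgebra k S) := Algebra.adjoin k {w} with hA0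
  set x : A0 := ⟨w, Algebra.self_mem_adjoin_singleton k w⟩ with hx
  set ψ : Polynomial k →ₐ[k] A0 := Polynomial.aeval x with hψ
  have hcomm : ∀ q : Polynomial k,
      ((Polynomial.aeval x q : A0) : MonoidAlgebra k S) = Polynomial.aeval w q := by
    intro q
    exact (Polynomial.aeval_algHom_apply A0.val x q).symm
  have hψsurj : Function.Surjective ψ := by
    rintro ⟨a, ha⟩
    have hex : ∃ q : Polynomial k, Polynomial.aeval w q = a := by
      refine Algebra.adjoin_induction
        (p := fun y _ => ∃ q : Polynomial k, Polynomial.aeval w q = y) ?_ ?_ ?_ ?_ ha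
      · intro y hy
        rw [Set.mem_singleton_iff] at hy
        exact ⟨Polynomial.X, by rw [hy, Polynomial.aeval_X]⟩
      · intro r
        exact ⟨Polynomial.C r, by rw [Polynomial.aeval_C]⟩
      · rintro y z _ _ ⟨q1, hq1⟩ ⟨q2, hq2⟩
        exact ⟨q1 + q2, by rw [map_add, hq1, hq2]⟩
      · rintro y z _ _ ⟨q1, hq1⟩ ⟨q2, hq2⟩
        exact ⟨q1 * q2, by rw [map_mul, hq1, hq2]⟩
    obtain ⟨q, hq⟩ := hex
    exact ⟨q, Subtype.ext (by rw [hψ, hcomm q, hq])⟩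
  have hkerψ : RingHom.ker ψ = Ideal.span {minpoly k w} := by
    ext q
    rw [RingHom.mem_ker, Ideal.mem_span_singleton]
    constructor
    · intro hq
      apply minpoly.dvd k w
      have h2 := hcomm q
      rw [hψ] at hq
      rw [hq] at h2
      simpa using h2.symm
    · rintro ⟨r, rfl⟩
      have hone : ψ (minpoly k w) = 0 := by
        apply Subtype.ext
        rw [hψ]
        show ((Polynomial.aeval x (minpoly k w) : A0) : MonoidAlgebra k S) = 0
        rw [hcomm (minpoly k w), minpoly.aeval k w]
      rw [map_mul, hone, zero_mul]
  have E1 : (Polynomial k ⧸ Ideal.span {minpoly k w}) ≃ₐ[k] A0 :=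
    (Ideal.quotientEquivAlgOfEq k hkerψ.symm).trans
      (Ideal.quotientKerAlgEquivOfSurjective hψsurj)
  -- evaluation at the roots
  set Φ : Polynomial k →ₐ[k] (RT → k) :=
    Pi.algHom _ _ (fun v : RT => Polynomial.aeval (v : k)) with hΦ
  have hΦapp : ∀ (q : Polynomial k) (v : RT), Φ q v = Polynomial.eval (v : k) q := by
    intro q v
    rw [hΦ]
    show Polynomial.aeval (v : k) q = Polynomial.eval (v : k) q
    rw [Polynomial.aeval_def, Polynomial.eval]
    rfl
  have hΦsurj : Function.Surjective Φ := by
    intro g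
    refine ⟨Lagrange.interpolate RT id
      (fun z : k => if h : z ∈ RT then g ⟨z, h⟩ else 0), funext fun v => ?_⟩
    rw [hΦapp]
    have := Lagrange.eval_interpolate_at_node
      (v := id) (r := fun z : k => if h : z ∈ RT then g ⟨z, h⟩ else 0)
      (Set.injOn_id _) v.2
    simp only [id_eq] at this
    rw [this, dif_pos v.2]
  have hkerΦ : RingHom.ker Φ = Ideal.span {minpoly k w} := by
    ext q
    rw [RingHom.mem_ker, Ideal.mem_span_singleton]
    constructor
    · intro hq
      rw [hfact]
      refine Finset.prod_dvd_of_coprime ?_ ?_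
      · intro a ha b hb hab
        have hne : (⟨a, ha⟩ : RT) ≠ ⟨b, hb⟩ := fun hcon => hab (congrArg Subtype.val hcon)
        exact Polynomial.isCoprime_X_sub_C_of_isUnit_sub (sub_ne_zero_of_ne hab).isUnit
      · intro v hv
        rw [Polynomial.dvd_iff_isRoot]
        have h3 := congrFun hq ⟨v, hv⟩
        rw [hΦapp] at h3
        exact h3
    · rintro ⟨r, rfl⟩
      funext v
      rw [map_mul]
      show Φ (minpoly k w) v * Φ r v = 0
      rw [hΦapp]
      have hroot : Polynomial.IsRoot (minpoly k w) (v : k) :=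
        Polynomial.isRoot_of_mem_roots (Multiset.mem_toFinset.mp v.2)
      rw [hroot, zero_mul]
  have E2 : (Polynomial k ⧸ Ideal.span {minpoly k w}) ≃ₐ[k] (RT → k) :=
    (Ideal.quotientEquivAlgOfEq k hkerΦ.symm).trans
      (Ideal.quotientKerAlgEquivOfSurjective hΦsurj)
  set e : RT ≃ Fin (Fintype.card RT) := Fintype.equivFin RT with he
  have E3 : (RT → k) ≃ₐ[k] (Fin (Fintype.card RT) → k) :=
    { toFun := fun f i => f (e.symm i)
      invFun := fun g v => g (e v)
      left_inv := fun f => funext fun v => by simp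
      right_inv := fun g => funext fun i => by simp
      map_mul' := fun f g => rfl
      map_add' := fun f g => rfl
      commutes' := fun r => rfl }
  exact ⟨Fintype.card RT, ⟨(E1.symm.trans E2).trans E3⟩⟩
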